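/- arXiv:1511.06378 — 5 statements merged into one kernel-verified Lean document; each statement's English description precedes it below -/
import Mathlib

section
/- For integers r ≥ 2 and s ≥ 3, the largest adjacency eigenvalue of the kite graph P_r · K_s satisfies s − 1 + 1/(s(s−1)) < λ₁(P_r · K_s) < s − 1 + 1/(s−1)². -/
open Finset Matrix

/-- The kite (lollipop) graph P_r · K_s on r + s − 1 vertices: vertices 0, …, r−1 form a
path, and vertices r−1, …, r+s−2 form a clique. -/
def kiteGraph (r s : ℕ) : SimpleGraph (Fin (r + s - 1)) where
  Adj a b := a ≠ b ∧
    ((a : ℕ) + 1 = b ∨ (b : ℕ) + 1 = a ∨ (r - 1 ≤ (a : ℕ) ∧ r - 1 ≤ (b : ℕ)))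
  symm := by
    constructor
    rintro a b ⟨hab, h⟩
    exact ⟨hab.symm, by tauto⟩
  loopless := by constructor; rintro a ⟨hab, -⟩; exact hab rfl

instance (r s : ℕ) : DecidableRel (kiteGraph r s).Adj := fun a b => by
  unfold kiteGraph; infer_instance

set_option maxHeartbeats 2000000 in
/-- For r ≥ 2 and s ≥ 3, the largest adjacency eigenvalue λ₁ (the eigenvalue of the
positive Perron eigenvector) of the kite graph P_r · K_s satisfies
s − 1 + 1/(s(s−1)) < λ₁ < s − 1 + 1/(s−1)². -/
theorem kite_lambda_bounds (r s : ℕ) (hr : 2 ≤ r) (hs : 3 ≤ s)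
    (lam : ℝ) (v : Fin (r + s - 1) → ℝ) (hv : ∀ x, 0 < v x)
    (heig : (kiteGraph r s).adjMatrix ℝ *ᵥ v = lam • v) :
    (s : ℝ) - 1 + 1 / (s * (s - 1)) < lam ∧ lam < (s : ℝ) - 1 + 1 / ((s : ℝ) - 1) ^ 2 := by
  have h0 : 0 < r + s - 1 := by omega
  have h1 : 1 < r + s - 1 := by omega
  have hr1 : r - 1 < r + s - 1 := by omega
  have hr2 : r - 2 < r + s - 1 := by omega
  have hrN : r < r + s - 1 := by omega
  have adj_iff : ∀ x y : Fin (r + s - 1), (kiteGraph r s).Adj x y ↔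
      ((x : ℕ) ≠ (y : ℕ) ∧ ((x : ℕ) + 1 = y ∨ (y : ℕ) + 1 = x ∨
        (r - 1 ≤ (x : ℕ) ∧ r - 1 ≤ (y : ℕ)))) := by
    intro x y
    constructor
    · rintro ⟨h, h2⟩
      exact ⟨fun hh => h (Fin.ext hh), h2⟩
    · rintro ⟨h, h2⟩
      exact ⟨fun hh => h (congrArg Fin.val hh), h2⟩
  have key : ∀ x : Fin (r + s - 1),
      ∑ y ∈ (kiteGraph r s).neighborFinset x, v y = lam * v x := by
    intro x
    have hx := congrFun heig x
    rw [SimpleGraph.adjMatrix_mulVec_apply] at hx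
    simpa using hx
  have vcong : ∀ (i j : ℕ) (hi : i < r + s - 1) (hj : j < r + s - 1), i = j →
      v ⟨i, hi⟩ = v ⟨j, hj⟩ := by
    intro i j hi hj hij
    subst hij; rfl
  -- vertex 0
  have eq0 : lam * v ⟨0, h0⟩ = v ⟨1, h1⟩ := by
    have h := key ⟨0, h0⟩
    have hfe : (kiteGraph r s).neighborFinset ⟨0, h0⟩ = {⟨1, h1⟩} := by
      ext y
      simp only [SimpleGraph.mem_neighborFinset, adj_iff, mem_singleton, Fin.ext_iff]
      omega
    rw [hfe, Finset.sum_singleton] at h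
    exact h.symm
  -- interior path vertices
  have eqP : ∀ i (hxm : i - 1 < r + s - 1) (hx : i < r + s - 1) (hxp : i + 1 < r + s - 1)
      (hi1 : 1 ≤ i) (hi2 : i ≤ r - 2),
      lam * v ⟨i, hx⟩ = v ⟨i - 1, hxm⟩ + v ⟨i + 1, hxp⟩ := by
    intro i hxm hx hxp hi1 hi2
    have h := key ⟨i, hx⟩
    have hfe : (kiteGraph r s).neighborFinset ⟨i, hx⟩ = {⟨i - 1, hxm⟩, ⟨i + 1, hxp⟩} := by
      ext y
      simp only [SimpleGraph.mem_neighborFinset, adj_iff, mem_insert, mem_singleton, Fin.ext_iff]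
      omega
    rw [hfe, Finset.sum_insert (by simp only [mem_singleton, Fin.ext_iff]; omega),
      Finset.sum_singleton] at h
    exact h.symm
  -- the junction vertex r-1
  have eqJ : lam * v ⟨r - 1, hr1⟩
      = v ⟨r - 2, hr2⟩ + ∑ y ∈ Finset.Ici (⟨r, hrN⟩ : Fin (r + s - 1)), v y := by
    have h := key ⟨r - 1, hr1⟩
    have hfe : (kiteGraph r s).neighborFinset ⟨r - 1, hr1⟩
        = insert ⟨r - 2, hr2⟩ (Finset.Ici (⟨r, hrN⟩ : Fin (r + s - 1))) := by
      ext y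
      simp only [SimpleGraph.mem_neighborFinset, adj_iff, mem_insert, Finset.mem_Ici,
        Fin.le_def, Fin.ext_iff]
      omega
    rw [hfe, Finset.sum_insert (by simp only [Finset.mem_Ici, Fin.le_def]; omega)] at h
    exact h.symm
  -- clique vertices j ≥ r
  have eqK : ∀ j (hj1 : r ≤ j) (hj2 : j < r + s - 1),
      lam * v ⟨j, hj2⟩ + v ⟨j, hj2⟩
        = ∑ y ∈ Finset.Ici (⟨r - 1, hr1⟩ : Fin (r + s - 1)), v y := by
    intro j hj1 hj2
    have h := key ⟨j, hj2⟩
    have hfe : (kiteGraph r s).neighborFinset ⟨j, hj2⟩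
        = (Finset.Ici (⟨r - 1, hr1⟩ : Fin (r + s - 1))).erase ⟨j, hj2⟩ := by
      ext y
      simp only [SimpleGraph.mem_neighborFinset, adj_iff, Finset.mem_erase, Finset.mem_Ici,
        Fin.le_def, Fin.ext_iff, ne_eq]
      omega
    rw [hfe] at h
    have h2 := Finset.sum_erase_add (Finset.Ici (⟨r - 1, hr1⟩ : Fin (r + s - 1))) v
      (show (⟨j, hj2⟩ : Fin (r + s - 1)) ∈ _ from by simp only [Finset.mem_Ici, Fin.le_def]; omega)
    rw [h] at h2
    exact h2
  have hsplit : ∑ y ∈ Finset.Ici (⟨r - 1, hr1⟩ : Fin (r + s - 1)), v y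
      = v ⟨r - 1, hr1⟩ + ∑ y ∈ Finset.Ici (⟨r, hrN⟩ : Fin (r + s - 1)), v y := by
    have hins : Finset.Ici (⟨r - 1, hr1⟩ : Fin (r + s - 1))
        = insert ⟨r - 1, hr1⟩ (Finset.Ici (⟨r, hrN⟩ : Fin (r + s - 1))) := by
      ext y
      simp only [mem_insert, Finset.mem_Ici, Fin.le_def, Fin.ext_iff]
      omega
    rw [hins, Finset.sum_insert (by simp only [Finset.mem_Ici, Fin.le_def]; omega)]
  have hlam : 0 < lam := by nlinarith [eq0, hv ⟨0, h0⟩, hv ⟨1, h1⟩]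
  have hconst : ∀ j (hj1 : r ≤ j) (hj2 : j < r + s - 1), v ⟨j, hj2⟩ = v ⟨r, hrN⟩ := by
    intro j hj1 hj2
    have ha := eqK j hj1 hj2
    have hb := eqK r le_rfl hrN
    have hz : (lam + 1) * (v ⟨j, hj2⟩ - v ⟨r, hrN⟩) = 0 := by linear_combination ha - hb
    rcases mul_eq_zero.mp hz with h | h
    · linarith
    · linarith [sub_eq_zero.mp h]
  have hsum' : ∑ y ∈ Finset.Ici (⟨r, hrN⟩ : Fin (r + s - 1)), v y
      = ((s : ℝ) - 1) * v ⟨r, hrN⟩ := by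
    have hc : ∀ y ∈ Finset.Ici (⟨r, hrN⟩ : Fin (r + s - 1)), v y = v ⟨r, hrN⟩ := by
      intro y hy
      have hy' : r ≤ (y : ℕ) := by simpa [Finset.mem_Ici, Fin.le_def] using hy
      have := hconst (y : ℕ) hy' y.isLt
      simpa using this
    rw [Finset.sum_congr rfl hc, Finset.sum_const, Fin.card_Ici, nsmul_eq_mul]
    congr 1
    have hc2 : r + s - 1 - ((⟨r, hrN⟩ : Fin (r + s - 1)) : ℕ) = s - 1 := by
      simp only []
      omega
    rw [hc2, Nat.cast_sub (by omega : 1 ≤ s), Nat.cast_one]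
  -- scalar setup
  set q : ℝ := (s : ℝ) - 1 with hqdef
  have hq : 2 ≤ q := by
    have : (3 : ℝ) ≤ (s : ℝ) := by exact_mod_cast hs
    simp only [hqdef]; linarith
  set ys : ℝ := v ⟨r, hrN⟩ with hysdef
  set y1 : ℝ := v ⟨r - 1, hr1⟩ with hy1def
  set y0 : ℝ := v ⟨r - 2, hr2⟩ with hy0def
  have hys : 0 < ys := hv _
  have hy1 : 0 < y1 := hv _
  have hy0 : 0 < y0 := hv _
  have hA : lam * ys + ys = y1 + q * ys := by
    have := eqK r le_rfl hrN
    rw [hsplit, hsum'] at this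
    linarith [this]
  have hB : lam * y1 = y0 + q * ys := by
    have := eqJ
    rw [hsum'] at this
    linarith [this]
  set a : ℝ := lam - q with hadef
  have hy1eq : y1 = (a + 1) * ys := by simp only [hadef]; linarith [hA]
  have hy0eq : y0 = a * (lam + 1) * ys := by
    simp only [hadef]
    nlinarith [hB, hy1eq]
  have hlam1 : 0 < lam + 1 := by linarith
  have ha : 0 < a := by nlinarith [hy0eq, hy0, hys, hlam, mul_pos hlam1 hys]
  -- one-step inequality along the path : lam * y0 ≥ y1
  have hstep : y1 ≤ lam * y0 := by
    rcases Nat.lt_or_ge r 3 with h3 | h3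
    · -- r = 2
      have hr2' : r = 2 := by omega
      have e1 : y0 = v ⟨0, h0⟩ := vcong _ _ _ _ (by omega)
      have e2 : y1 = v ⟨1, h1⟩ := vcong _ _ _ _ (by omega)
      rw [e1, e2, eq0]
    · have hm : r - 2 - 1 < r + s - 1 := by omega
      have hp : r - 2 + 1 < r + s - 1 := by omega
      have h := eqP (r - 2) hm hr2 hp (by omega) le_rfl
      have e1 : v ⟨r - 2 + 1, hp⟩ = y1 := vcong _ _ _ _ (by omega)
      rw [e1, ← hy0def] at h
      have := hv ⟨r - 2 - 1, hm⟩
      linarith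
  have hlq : lam = a + q := by rw [hadef]; ring
  -- main scalar inequality from the path step
  have hF3 : a + 1 ≤ lam * a * (lam + 1) := by
    have h := hstep
    rw [hy0eq, hy1eq] at h
    nlinarith [h, hys]
  constructor
  · -- lower bound
    have hlow : 1 < a * (q * (q + 1)) := by
      by_contra hcon
      push_neg at hcon
      have ha6 : 6 * a ≤ 1 := by
        nlinarith [hcon, ha, hq,
          mul_nonneg (mul_nonneg ha.le (by linarith : (0:ℝ) ≤ q - 2)) (by linarith : (0:ℝ) ≤ q + 3)]
      have hF3' : a + 1 ≤ (a + q) * a * ((a + q) + 1) := by rw [← hlq]; exact hF3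
      nlinarith [hF3', hcon, ha, hq, ha6,
        mul_nonneg (mul_nonneg ha.le (by linarith : (0:ℝ) ≤ q)) (by linarith : (0:ℝ) ≤ q - 2),
        mul_pos ha ha, mul_nonneg (mul_nonneg ha.le ha.le) ha.le]
    have hsq : (s : ℝ) = q + 1 := by rw [hqdef]; ring
    rw [hsq]
    have hd : 1 / ((q + 1) * q) < a := by
      rw [div_lt_iff₀ (by positivity)]
      nlinarith [hlow]
    linarith [hd]
  · -- upper bound
    by_contra hcon
    push_neg at hcon
    -- hcon : q + 1/q^2 ≤ lam  (after set, the goal's (s:ℝ)-1 got folded to q)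
    have h1q : (0:ℝ) < q ^ 2 := by positivity
    have haa : 1 / q ^ 2 ≤ a := by rw [hadef]; linarith [hcon]
    have haq : 1 ≤ a * q ^ 2 := by
      calc (1:ℝ) = 1 / q ^ 2 * q ^ 2 := by field_simp
      _ ≤ a * q ^ 2 := by nlinarith [haa, h1q]
    have hF : 0 ≤ (q ^ 2 + 1) * lam * (lam + 1) - (q ^ 2 + 1) ^ 2 - (lam + 1) ^ 2 := by
      rw [hlq]
      nlinarith [mul_nonneg ha.le (by nlinarith [hq] : (0:ℝ) ≤ q ^ 2 - 1),
        mul_nonneg (by linarith [haq] : (0:ℝ) ≤ a * q ^ 2 - 1) (by linarith : (0:ℝ) ≤ 2 * q),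
        mul_nonneg (by linarith : (0:ℝ) ≤ q - 2) (by positivity : (0:ℝ) ≤ q ^ 2 + 1),
        mul_nonneg (mul_nonneg ha.le ha.le) (sq_nonneg q)]
    have hbase : q ^ 2 + 1 < lam * (lam + 1) := by
      rw [hlq]; nlinarith [ha, hq]
    have claim : ∀ i (hi : i < r + s - 1) (hip : i + 1 < r + s - 1), i ≤ r - 2 →
        (q ^ 2 + 1) * v ⟨i, hi⟩ < (lam + 1) * v ⟨i + 1, hip⟩ := by
      intro i
      induction i with
      | zero =>
        intro hi hip _
        rw [vcong 0 0 hi h0 rfl, vcong 1 1 hip h1 rfl, ← eq0]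
        nlinarith [mul_lt_mul_of_pos_right hbase (hv ⟨0, h0⟩)]
      | succ i ih =>
        intro hi hip hle
        have hi' : i < r + s - 1 := by omega
        have h1' := ih hi' hi (by omega)
        have heq := eqP (i + 1) hi' hi hip (by omega) hle
        rw [vcong (i + 1 - 1) i (by omega) hi' (by omega)] at heq
        have heq2 : (q ^ 2 + 1) * (lam + 1) * (lam * v ⟨i + 1, hi⟩)
            = (q ^ 2 + 1) * (lam + 1) * (v ⟨i, hi'⟩ + v ⟨i + 1 + 1, hip⟩) := by rw [heq]
        have hstep3 : (q ^ 2 + 1) * ((q ^ 2 + 1) * v ⟨i + 1, hi⟩)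
            < (q ^ 2 + 1) * ((lam + 1) * v ⟨i + 1 + 1, hip⟩) := by
          nlinarith [mul_lt_mul_of_pos_left h1' hlam1,
            mul_nonneg hF (hv ⟨i + 1, hi⟩).le, heq2]
        exact lt_of_mul_lt_mul_left hstep3 (by positivity)
    have hp : r - 2 + 1 < r + s - 1 := by omega
    have hfin := claim (r - 2) hr2 hp le_rfl
    rw [vcong (r - 2 + 1) (r - 1) hp hr1 (by omega), ← hy0def, ← hy1def] at hfin
    rw [hy0eq, hy1eq] at hfin
    nlinarith [hfin, haq, mul_pos hlam1 hys, ha, hq]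
end

section
/- The function f(x) = (x^k − x^{−k})/(x − x^{−1}) is strictly increasing for x > 1, for any integer k ≥ 2. -/
private lemma base_le {u v : ℝ} (hu : 1 ≤ u) (huv : u ≤ v) : u + u⁻¹ ≤ v + v⁻¹ := by
  have hu0 : 0 < u := lt_of_lt_of_le one_pos hu
  have hv0 : 0 < v := lt_of_lt_of_le hu0 huv
  have h1 : u * u⁻¹ = 1 := mul_inv_cancel₀ hu0.ne'
  have h2 : v * v⁻¹ = 1 := mul_inv_cancel₀ hv0.ne'
  have huv1 : 1 ≤ u * v := by nlinarith
  nlinarith [mul_pos hu0 hv0, mul_pos (inv_pos.mpr hu0) (inv_pos.mpr hv0),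
    mul_nonneg (sub_nonneg.mpr huv) (sub_nonneg.mpr huv1)]

private lemma base_lt {u v : ℝ} (hu : 1 ≤ u) (huv : u < v) : u + u⁻¹ < v + v⁻¹ := by
  have hu0 : 0 < u := lt_of_lt_of_le one_pos hu
  have hv0 : 0 < v := lt_trans hu0 huv
  have h1 : u * u⁻¹ = 1 := mul_inv_cancel₀ hu0.ne'
  have h2 : v * v⁻¹ = 1 := mul_inv_cancel₀ hv0.ne'
  have huv1 : 1 < u * v := by nlinarith
  nlinarith [mul_pos hu0 hv0, mul_pos (inv_pos.mpr hu0) (inv_pos.mpr hv0),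
    mul_pos (sub_pos.mpr huv) (sub_pos.mpr huv1)]

private lemma pair_le (m : ℤ) {a b : ℝ} (ha : 1 ≤ a) (hab : a ≤ b) :
    a ^ m + a ^ (-m) ≤ b ^ m + b ^ (-m) := by
  have ha0 : 0 ≤ a := le_trans zero_le_one ha
  have h := base_le (one_le_pow₀ ha (n := m.natAbs)) (pow_le_pow_left₀ ha0 hab m.natAbs)
  rcases m.natAbs_eq with hm | hm
  · rw [hm]; simp only [zpow_neg, zpow_natCast]; linarith
  · rw [hm]; simp only [neg_neg, zpow_neg, zpow_natCast]; linarith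

private lemma pair_lt (m : ℤ) (hm : m ≠ 0) {a b : ℝ} (ha : 1 ≤ a) (hab : a < b) :
    a ^ m + a ^ (-m) < b ^ m + b ^ (-m) := by
  have ha0 : 0 ≤ a := le_trans zero_le_one ha
  have hn : m.natAbs ≠ 0 := Int.natAbs_ne_zero.mpr hm
  have hlt : a ^ m.natAbs < b ^ m.natAbs := pow_lt_pow_left₀ hab ha0 hn
  have h := base_lt (one_le_pow₀ ha (n := m.natAbs)) hlt
  rcases m.natAbs_eq with hm | hm
  · rw [hm]; simp only [zpow_neg, zpow_natCast]; linarith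
  · rw [hm]; simp only [neg_neg, zpow_neg, zpow_natCast]; linarith

private lemma f_eq (k : ℕ) {x : ℝ} (hx : 1 < x) :
    (x ^ k - x⁻¹ ^ k) / (x - x⁻¹) =
      ∑ i ∈ Finset.range k, x ^ (2 * (i : ℤ) - (k - 1)) := by
  have hx0 : 0 < x := lt_trans one_pos hx
  have hxi : x⁻¹ < 1 := inv_lt_one_of_one_lt₀ hx
  have hne : x - x⁻¹ ≠ 0 := by linarith
  rw [div_eq_iff hne, ← geom_sum₂_mul x x⁻¹ k]
  congr 1
  refine Finset.sum_congr rfl fun i hi => ?_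
  have hik : i < k := Finset.mem_range.mp hi
  rw [inv_pow, ← zpow_natCast x i, ← zpow_natCast x (k - 1 - i), ← zpow_neg,
    ← zpow_add₀ hx0.ne']
  congr 1
  have : ((k - 1 - i : ℕ) : ℤ) = (k : ℤ) - 1 - i := by
    push_cast [Nat.cast_sub (by omega : i ≤ k - 1), Nat.cast_sub (by omega : 1 ≤ k)]; ring
  omega

/-- The function f(x) = (x^k − x^{−k})/(x − x^{−1}) is strictly increasing for x > 1,
for any integer k ≥ 2. -/
theorem f_strictMonoOn (k : ℕ) (hk : 2 ≤ k) :
    StrictMonoOn (fun x : ℝ => (x ^ k - x⁻¹ ^ k) / (x - x⁻¹)) (Set.Ioi 1) := by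
  intro a ha b hb hab
  simp only [Set.mem_Ioi] at ha hb
  simp only
  rw [f_eq k ha, f_eq k hb]
  have refl_eq : ∀ x : ℝ, 0 < x →
      (2 : ℝ) * ∑ i ∈ Finset.range k, x ^ (2 * (i : ℤ) - (k - 1)) =
      ∑ i ∈ Finset.range k,
        (x ^ (2 * (i : ℤ) - (k - 1)) + x ^ (-(2 * (i : ℤ) - (k - 1)))) := by
    intro x hx
    rw [Finset.sum_add_distrib, two_mul]
    congr 1
    rw [← Finset.sum_range_reflect (fun i => x ^ (2 * (i : ℤ) - (k - 1))) k]
    refine Finset.sum_congr rfl fun i hi => ?_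
    have hik : i < k := Finset.mem_range.mp hi
    congr 1
    have : ((k - 1 - i : ℕ) : ℤ) = (k : ℤ) - 1 - i := by
      push_cast [Nat.cast_sub (by omega : i ≤ k - 1), Nat.cast_sub (by omega : 1 ≤ k)]; ring
    omega
  have key : (2 : ℝ) * ∑ i ∈ Finset.range k, a ^ (2 * (i : ℤ) - (k - 1)) <
      2 * ∑ i ∈ Finset.range k, b ^ (2 * (i : ℤ) - (k - 1)) := by
    rw [refl_eq a (by linarith), refl_eq b (by linarith)]
    refine Finset.sum_lt_sum (fun i _ => pair_le _ ha.le hab.le) ⟨k - 1, ?_, ?_⟩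
    · exact Finset.mem_range.mpr (by omega)
    · refine pair_lt _ ?_ ha.le hab
      have : ((k - 1 : ℕ) : ℤ) = (k : ℤ) - 1 := by omega
      omega
  linarith
end

section
/- Let G be a connected graph with principal eigenvector v scaled so the maximum entry is 1, attained at vertex x. If λ₁(G) > |N(x)| − 1, then for every subset U of N(x), |U| − 1 < Σ_{y ∈ U} v(y) ≤ |U|. -/
open Finset Matrix

/-- If v is the principal eigenvector of a connected graph, normalized with maximum
entry 1 attained at x, and λ₁ > |N(x)| − 1, then for every subset U of N(x),
|U| − 1 < Σ_{y ∈ U} v(y) ≤ |U|. -/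
theorem neighborhood_subset_sum {V : Type*} [Fintype V] [DecidableEq V]
    (G : SimpleGraph V) [DecidableRel G.Adj] (hG : G.Connected)
    (lam : ℝ) (v : V → ℝ) (hv : ∀ y, 0 < v y)
    (heig : G.adjMatrix ℝ *ᵥ v = lam • v)
    (x : V) (hmax : ∀ y, v y ≤ v x) (hx1 : v x = 1)
    (hlam : (G.degree x : ℝ) - 1 < lam) :
    ∀ U ⊆ G.neighborFinset x,
      (U.card : ℝ) - 1 < ∑ y ∈ U, v y ∧ ∑ y ∈ U, v y ≤ (U.card : ℝ) := by
  intro U hU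
  have hvle : ∀ y, v y ≤ 1 := fun y => hx1 ▸ hmax y
  have hsum : ∑ y ∈ G.neighborFinset x, v y = lam := by
    have := congrFun heig x
    rw [SimpleGraph.adjMatrix_mulVec_apply] at this
    simpa [hx1] using this
  have hsplit : ∑ y ∈ G.neighborFinset x, v y
      = ∑ y ∈ U, v y + ∑ y ∈ G.neighborFinset x \ U, v y := by
    rw [← Finset.sum_union (Finset.disjoint_sdiff), Finset.union_sdiff_of_subset hU]
  have hcompl : ∑ y ∈ G.neighborFinset x \ U, v y
      ≤ ((G.neighborFinset x \ U).card : ℝ) := by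
    calc ∑ y ∈ G.neighborFinset x \ U, v y ≤ ∑ _y ∈ G.neighborFinset x \ U, (1:ℝ) :=
          Finset.sum_le_sum fun y _ => hvle y
      _ = _ := by simp
  have hcard : ((G.neighborFinset x \ U).card : ℝ) = (G.degree x : ℝ) - U.card := by
    rw [Finset.card_sdiff_of_subset hU, SimpleGraph.card_neighborFinset_eq_degree]
    have := Finset.card_le_card hU
    rw [SimpleGraph.card_neighborFinset_eq_degree] at this
    push_cast [this]
    ring
  constructor
  · have : lam ≤ ∑ y ∈ U, v y + ((G.degree x : ℝ) - U.card) := by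
      rw [← hsum, hsplit]
      linarith [hcard ▸ hcompl]
    linarith
  · calc ∑ y ∈ U, v y ≤ ∑ _y ∈ U, (1:ℝ) := Finset.sum_le_sum fun y _ => hvle y
      _ = U.card := by simp
end

section
/- Let G be a connected graph with principal eigenvector v scaled so the maximum entry is 1, attained at vertex x. If λ₁(G) > |N(x)| − 1, then at most one vertex in N(x) has eigenvector entry smaller than 1/2. -/
open Finset Matrix

/-- If v is the principal eigenvector of a connected graph, normalized with maximum
entry 1 attained at x, and λ₁ > |N(x)| − 1, then at most one vertex of N(x) has
eigenvector entry smaller than 1/2. -/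
theorem at_most_one_small_neighbor {V : Type*} [Fintype V] [DecidableEq V]
    (G : SimpleGraph V) [DecidableRel G.Adj] (hG : G.Connected)
    (lam : ℝ) (v : V → ℝ) (hv : ∀ y, 0 < v y)
    (heig : G.adjMatrix ℝ *ᵥ v = lam • v)
    (x : V) (hmax : ∀ y, v y ≤ v x) (hx1 : v x = 1)
    (hlam : (G.degree x : ℝ) - 1 < lam) :
    ((G.neighborFinset x).filter (fun y => v y < 1 / 2)).card ≤ 1 := by
  by_contra h
  push_neg at h
  set s := (G.neighborFinset x).filter (fun y => v y < 1 / 2) with hs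
  have hs2 : 2 ≤ s.card := h
  have hsne : s.Nonempty := Finset.card_pos.mp (by omega)
  -- eigenvalue equation at x
  have heq : lam = ∑ y ∈ G.neighborFinset x, v y := by
    have := congrFun heig x
    rw [SimpleGraph.adjMatrix_mulVec_apply] at this
    simp [Pi.smul_apply, hx1] at this
    linarith [this]
  have hsplit : ∑ y ∈ G.neighborFinset x, v y
      = ∑ y ∈ s, v y + ∑ y ∈ (G.neighborFinset x).filter (fun y => ¬ v y < 1 / 2), v y := by
    rw [hs, Finset.sum_filter_add_sum_filter_not]
  have h1 : ∑ y ∈ s, v y < (s.card : ℝ) * (1 / 2) := by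
    calc ∑ y ∈ s, v y < ∑ y ∈ s, (1 / 2 : ℝ) := by
          refine Finset.sum_lt_sum_of_nonempty hsne fun y hy => ?_
          exact (Finset.mem_filter.mp hy).2
      _ = (s.card : ℝ) * (1 / 2) := by rw [Finset.sum_const, nsmul_eq_mul]
  set t := (G.neighborFinset x).filter (fun y => ¬ v y < 1 / 2) with ht
  have h2 : ∑ y ∈ t, v y ≤ (t.card : ℝ) := by
    calc ∑ y ∈ t, v y ≤ ∑ y ∈ t, (1 : ℝ) :=
          Finset.sum_le_sum fun y hy => by rw [← hx1]; exact hmax y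
      _ = (t.card : ℝ) := by simp
  have hcard : s.card + t.card = G.degree x := by
    rw [hs, ht, Finset.card_filter_add_card_filter_not,
      SimpleGraph.card_neighborFinset_eq_degree]
  have : lam < (G.degree x : ℝ) - 1 := by
    have hcr : (s.card : ℝ) + (t.card : ℝ) = (G.degree x : ℝ) := by
      exact_mod_cast hcard
    have hsr : (2 : ℝ) ≤ (s.card : ℝ) := by exact_mod_cast hs2
    rw [heq, hsplit]
    nlinarith
  linarith
end

section
/- If G is a connected graph, v its principal eigenvector, and x, y vertices with N(y) \ {x} ⊊ N(x) \ {y} (the neighborhood of y, apart from possibly x, is strictly contained in that of x), then v(x) > v(y). -/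
open Finset Matrix

private lemma sum_erase_split {V : Type*} [Fintype V] [DecidableEq V]
    (s : Finset V) (a : V) (f : V → ℝ) :
    ∑ z ∈ s, f z = ∑ z ∈ s.erase a, f z + (if a ∈ s then f a else 0) := by
  by_cases h : a ∈ s
  · simp [h, Finset.sum_erase_add s f h]
  · simp [h, Finset.erase_eq_of_notMem h]

/-- If in a connected graph the neighborhood of y (apart from possibly x) is strictly
contained in the neighborhood of x (apart from possibly y), then the principal
eigenvector satisfies v(x) > v(y). -/
theorem eigenvector_entry_lt_of_nbhd_ssubset {V : Type*} [Fintype V] [DecidableEq V]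
    (G : SimpleGraph V) [DecidableRel G.Adj] (hG : G.Connected)
    (lam : ℝ) (v : V → ℝ) (hv : ∀ z, 0 < v z)
    (heig : G.adjMatrix ℝ *ᵥ v = lam • v)
    (x y : V) (hss : (G.neighborFinset y).erase x ⊂ (G.neighborFinset x).erase y) :
    v y < v x := by
  set A := (G.neighborFinset y).erase x with hA
  set B := (G.neighborFinset x).erase y with hB
  have hex : ∃ z ∈ B, z ∉ A := Finset.exists_of_ssubset hss
  obtain ⟨z, hzB, hzA⟩ := hex
  have hzN : z ∈ G.neighborFinset x := Finset.mem_of_mem_erase hzB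
  -- eigen equations
  have hx : lam * v x = ∑ w ∈ G.neighborFinset x, v w := by
    have := congrFun heig x
    simpa [SimpleGraph.adjMatrix_mulVec_apply, Pi.smul_apply, smul_eq_mul] using this.symm
  have hy : lam * v y = ∑ w ∈ G.neighborFinset y, v w := by
    have := congrFun heig y
    simpa [SimpleGraph.adjMatrix_mulVec_apply, Pi.smul_apply, smul_eq_mul] using this.symm
  -- lam > 0
  have hsum_pos : 0 < ∑ w ∈ G.neighborFinset x, v w := by
    have h1 : v z ≤ ∑ w ∈ G.neighborFinset x, v w :=
      Finset.single_le_sum (fun i _ => (hv i).le) hzN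
    exact lt_of_lt_of_le (hv z) h1
  have hlam : 0 < lam := by
    have := hx ▸ hsum_pos
    nlinarith [hv x]
  -- split sums
  have hxsplit : lam * v x = ∑ w ∈ B, v w + (if y ∈ G.neighborFinset x then v y else 0) := by
    rw [hx, sum_erase_split (G.neighborFinset x) y v]
  have hysplit : lam * v y = ∑ w ∈ A, v w + (if x ∈ G.neighborFinset y then v x else 0) := by
    rw [hy, sum_erase_split (G.neighborFinset y) x v]
  have hmemiff : (y ∈ G.neighborFinset x) ↔ (x ∈ G.neighborFinset y) := by
    simp [SimpleGraph.mem_neighborFinset, G.adj_comm]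
  have hsublt : ∑ w ∈ A, v w < ∑ w ∈ B, v w := by
    apply Finset.sum_lt_sum_of_subset hss.subset hzB hzA (hv z)
    exact fun j _ _ => (hv j).le
  by_cases hadj : y ∈ G.neighborFinset x
  · have hadj' : x ∈ G.neighborFinset y := hmemiff.mp hadj
    rw [if_pos hadj] at hxsplit
    rw [if_pos hadj'] at hysplit
    nlinarith
  · have hadj' : x ∉ G.neighborFinset y := fun h => hadj (hmemiff.mpr h)
    rw [if_neg hadj] at hxsplit
    rw [if_neg hadj'] at hysplit
    nlinarith
end
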